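/- Let G be the star graph K_{1,n} with center vertex v_0 and leaves u_1,…,u_n (n ≥ 2), with edges (v_0, u_i) for each i. Let C be any configuration with C(v_0) = v_0 and C(u_i) ≠ u_i for every leaf u_i. Then every sequence of matchings solving the instance (G,C) has length at least n. Since d_max = 2 for such a configuration, the stretch factor of the lower bound d_max on subdivided star graphs is Ω(h), where h is the maximum degree. -/

import Mathlib

/-- A matching of the graph `G`, encoded as an involution of the vertex set that
moves vertices only along edges of `G`. -/
def IsMatchingPerm {V : Type*} (G : SimpleGraph V) (m : V → V) : Prop :=
  Function.Involutive m ∧ ∀ v, m v = v ∨ G.Adj v (m v)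

/-- The configuration obtained from `C` by applying the sequence of matchings
`ms = [M₁, …, M_k]` (with `M₁` applied first):  `M_k ⋯ M₁ C = C ∘ m₁ ∘ ⋯ ∘ m_k`,
where `(M C)(v) = C (m v)`. -/
def routeSeq {V : Type*} (C : V → V) (ms : List (V → V)) : V → V :=
  C ∘ ms.foldr (· ∘ ·) id

/-- The sequence of matchings `ms = (M₁, …, M_k)` solves the instance `(G, C)`,
i.e. `M_k ⋯ M₁ C = Id`. -/
def Solves {V : Type*} (G : SimpleGraph V) (C : V → V) (ms : List (V → V)) : Prop :=
  (∀ m ∈ ms, IsMatchingPerm G m) ∧ routeSeq C ms = id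

/-- The star graph `K_{1,n}`: vertex `0` is the center and the `n` other vertices are
leaves, each adjacent only to the center. -/
def starGraph (n : ℕ) : SimpleGraph (Fin (n + 1)) :=
  SimpleGraph.fromRel fun u _ => u = 0

/-- on the star `K_{1,n}` with `n ≥ 2`, if `C` fixes the center token and
places every leaf token on a wrong leaf, then every solution has length at least `n`
(while `d_max = 2`, so the stretch factor of `d_max` on subdivided stars is `Ω(h)`). -/

private lemma foldr_fix {α : Type*} (l : List (α → α)) (v : α)
    (h : ∀ g ∈ l, g v = v) : l.foldr (· ∘ ·) id v = v := by
  induction l with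
  | nil => rfl
  | cons g t ih =>
    simp only [List.foldr_cons, Function.comp_apply]
    rw [ih (fun g hg => h g (List.mem_cons_of_mem _ hg))]
    exact h g (List.mem_cons_self)

private lemma matching_moves_unique_leaf {n : ℕ} {g : Fin (n+1) → Fin (n+1)}
    (hg : IsMatchingPerm (starGraph n) g) {v w : Fin (n+1)}
    (hv : v ≠ 0) (hw : w ≠ 0) (hgv : g v ≠ v) (hgw : g w ≠ w) : v = w := by
  obtain ⟨hinv, hadj⟩ := hg
  have hv0 : g v = 0 := by
    rcases hadj v with h | h
    · exact absurd h hgv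
    · rw [starGraph, SimpleGraph.fromRel_adj] at h
      rcases h.2 with h | h
      · exact absurd h hv
      · exact h
  have hw0 : g w = 0 := by
    rcases hadj w with h | h
    · exact absurd h hgw
    · rw [starGraph, SimpleGraph.fromRel_adj] at h
      rcases h.2 with h | h
      · exact absurd h hw
      · exact h
  have := hinv v
  rw [hv0] at this
  have := this.symm.trans (by rw [← hw0, hinv w])
  exact this

theorem stmt_9 (n : ℕ) (hn : 2 ≤ n) (C : Fin (n + 1) ≃ Fin (n + 1))
    (h0 : C 0 = 0) (hleaf : ∀ v : Fin (n + 1), v ≠ 0 → C v ≠ v)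
    (ms : List (Fin (n + 1) → Fin (n + 1))) (hms : Solves (starGraph n) (⇑C) ms) :
    n ≤ ms.length := by
  obtain ⟨hmatch, hsolve⟩ := hms
  have hmfun : ∀ v, ms.foldr (· ∘ ·) id v = C.symm v := by
    intro v
    have := congrFun hsolve v
    simp only [routeSeq, Function.comp_apply, id_eq] at this
    rw [Equiv.eq_symm_apply]
    exact this
  have key : ∀ v : Fin (n+1), v ≠ 0 → ∃ i : Fin ms.length, ms.get i v ≠ v := by
    intro v hv
    by_contra h
    push_neg at h
    have hfix : ms.foldr (· ∘ ·) id v = v := by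
      apply foldr_fix
      intro g hg
      obtain ⟨i, hi⟩ := List.mem_iff_get.mp hg
      rw [← hi]
      exact h i
    rw [hmfun v] at hfix
    have : C v = v := by
      conv_lhs => rw [← hfix]
      rw [Equiv.apply_symm_apply]
    exact hleaf v hv this
  classical
  have hcard : (Finset.univ.filter (fun v : Fin (n+1) => v ≠ 0)).card = n := by
    rw [Finset.filter_ne', Finset.card_erase_of_mem (Finset.mem_univ _)]
    simp
  have hle : (Finset.univ.filter (fun v : Fin (n+1) => v ≠ 0)).card ≤
      (Finset.range ms.length).card := by
    apply Finset.card_le_card_of_injOn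
      (f := fun v => if h : v ≠ 0 then (Classical.choose (key v h)).val else 0)
    · intro v hv
      simp only [Finset.mem_coe, Finset.mem_filter] at hv
      simp only [Finset.mem_coe]
      rw [dif_pos hv.2]
      exact Finset.mem_range.mpr (Classical.choose (key v hv.2)).isLt
    · intro v hv w hw hvw
      simp only [Finset.mem_coe, Finset.mem_filter] at hv hw
      simp only at hvw
      rw [dif_pos hv.2, dif_pos hw.2] at hvw
      have hvw' : Classical.choose (key v hv.2) = Classical.choose (key w hw.2) :=
        Fin.val_injective hvw
      set i := Classical.choose (key v hv.2) with hi
      have h1 : ms.get i v ≠ v := Classical.choose_spec (key v hv.2)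
      have h2 : ms.get i w ≠ w := by
        rw [hvw']
        exact Classical.choose_spec (key w hw.2)
      exact matching_moves_unique_leaf (hmatch _ (List.get_mem ms i)) hv.2 hw.2 h1 h2
  rw [hcard, Finset.card_range] at hle
  exact hle
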